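/- For all real numbers $x_1>0$ and $x_2>0$: $\int_{0}^{x_1}\int_{0}^{x_2} \frac{x_2\, z_1}{(z_1^2+z_2^2)(z_1^2+x_2^2)}\,dz_2\,dz_1 \;\le\; \frac{\pi^2}{4}.$ -/

import Mathlib

open Real MeasureTheory intervalIntegral

theorem stmt13 (x₁ x₂ : ℝ) (h1 : 0 < x₁) (h2 : 0 < x₂) :
    (∫ z₁ in (0:ℝ)..x₁, ∫ z₂ in (0:ℝ)..x₂,
        x₂ * z₁ / ((z₁ ^ 2 + z₂ ^ 2) * (z₁ ^ 2 + x₂ ^ 2)))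
      ≤ π ^ 2 / 4 := by
  set f : ℝ → ℝ := fun z₁ => ∫ z₂ in (0:ℝ)..x₂,
      x₂ * z₁ / ((z₁ ^ 2 + z₂ ^ 2) * (z₁ ^ 2 + x₂ ^ 2)) with hf_def
  set g : ℝ → ℝ := fun z₁ => π / 2 * (x₂ / (x₂ ^ 2 + z₁ ^ 2)) with hg_def
  have hgcont : Continuous g := by
    apply continuous_const.mul
    exact continuous_const.div (by continuity) fun t => by positivity
  have hfg : ∀ z₁ ∈ Set.Icc (0:ℝ) x₁, f z₁ ≤ g z₁ := by
    intro z₁ hz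
    rcases eq_or_lt_of_le hz.1 with h0 | h0
    · have hz0 : f z₁ = 0 := by simp [hf_def, ← h0]
      rw [hz0, hg_def]; positivity
    · have hden : ∀ t : ℝ, z₁ ^ 2 + t ^ 2 ≠ 0 := fun t => by positivity
      have key : f z₁ = x₂ / (z₁ ^ 2 + x₂ ^ 2) * arctan (x₂ / z₁) := by
        rw [hf_def]
        have hsplit : ∀ t : ℝ, x₂ * z₁ / ((z₁ ^ 2 + t ^ 2) * (z₁ ^ 2 + x₂ ^ 2))
            = x₂ / (z₁ ^ 2 + x₂ ^ 2) * (z₁ / (z₁ ^ 2 + t ^ 2)) := by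
          intro t
          rw [div_mul_div_comm]
          congr 1; ring
        simp only [hsplit]
        rw [intervalIntegral.integral_const_mul]
        have harc : (∫ t in (0:ℝ)..x₂, z₁ / (z₁ ^ 2 + t ^ 2)) = arctan (x₂ / z₁) := by
          have hd : ∀ t ∈ Set.uIcc (0:ℝ) x₂,
              HasDerivAt (fun s => arctan (s / z₁)) (z₁ / (z₁ ^ 2 + t ^ 2)) t := by
            intro t _
            have h := (Real.hasDerivAt_arctan (t / z₁)).comp t
              ((hasDerivAt_id t).div_const z₁)
            refine h.congr_deriv ?_
            have hz1 : z₁ ≠ 0 := ne_of_gt h0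
            field_simp
          have := intervalIntegral.integral_eq_sub_of_hasDerivAt hd
            ((continuous_const.div (by continuity) hden).intervalIntegrable _ _)
          rw [this]; simp
        rw [harc]
      rw [key, hg_def]
      have hle : x₂ / (z₁ ^ 2 + x₂ ^ 2) * arctan (x₂ / z₁)
          ≤ x₂ / (z₁ ^ 2 + x₂ ^ 2) * (π / 2) := by
        apply mul_le_mul_of_nonneg_left (Real.arctan_lt_pi_div_two _).le
        positivity
      calc x₂ / (z₁ ^ 2 + x₂ ^ 2) * arctan (x₂ / z₁)
          ≤ x₂ / (z₁ ^ 2 + x₂ ^ 2) * (π / 2) := hle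
        _ = π / 2 * (x₂ / (x₂ ^ 2 + z₁ ^ 2)) := by rw [add_comm (x₂ ^ 2)]; ring
  by_cases hint : IntervalIntegrable f volume 0 x₁
  · have hmono : (∫ z₁ in (0:ℝ)..x₁, f z₁) ≤ ∫ z₁ in (0:ℝ)..x₁, g z₁ :=
      intervalIntegral.integral_mono_on h1.le hint
        (hgcont.intervalIntegrable _ _) hfg
    have hg_val : (∫ z₁ in (0:ℝ)..x₁, g z₁) = π / 2 * arctan (x₁ / x₂) := by
      rw [hg_def]
      simp only
      rw [intervalIntegral.integral_const_mul]
      congr 1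
      have hd : ∀ t ∈ Set.uIcc (0:ℝ) x₁,
          HasDerivAt (fun s => arctan (s / x₂)) (x₂ / (x₂ ^ 2 + t ^ 2)) t := by
        intro t _
        have h := (Real.hasDerivAt_arctan (t / x₂)).comp t
          ((hasDerivAt_id t).div_const x₂)
        refine h.congr_deriv ?_
        have hx2 : x₂ ≠ 0 := ne_of_gt h2
        field_simp
      have := intervalIntegral.integral_eq_sub_of_hasDerivAt hd
        ((continuous_const.div (by continuity) (fun t => by positivity)).intervalIntegrable _ _)
      rw [this]; simp
    calc (∫ z₁ in (0:ℝ)..x₁, f z₁) ≤ ∫ z₁ in (0:ℝ)..x₁, g z₁ := hmono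
      _ = π / 2 * arctan (x₁ / x₂) := hg_val
      _ ≤ π / 2 * (π / 2) := by
          apply mul_le_mul_of_nonneg_left (Real.arctan_lt_pi_div_two _).le
          positivity
      _ = π ^ 2 / 4 := by ring
  · rw [show (∫ z₁ in (0:ℝ)..x₁, f z₁) = 0 from intervalIntegral.integral_undef hint]
    positivity
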